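/- arXiv:2509.04414 — 2 statements merged into one kernel-verified Lean document; each statement's English description precedes it below -/
import Mathlib

section
/- Let T : ℝⁿ → ℝᵐ be a linear map with operator norm ‖T‖ at most 1, and suppose that for the n-form ω pulled back by T one has ⋆T^*ω = ‖T‖ⁿ = 1 pointwise, where ω is a constant-coefficient n-form of comass one on ℝᵐ. Then T preserves norms, i.e. T is a linear isometric embedding ℝⁿ → ℝᵐ. -/
open RealInnerProductSpace

private lemma orthonormal_smul_sign {E : Type*} [NormedAddCommGroup E] [InnerProductSpace ℝ E]
    {ι : Type*} [DecidableEq ι] {u : ι → E} (hu : Orthonormal ℝ u) (s : ι → ℝ)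
    (hs : ∀ i, s i * s i = 1) :
    Orthonormal ℝ (fun i => s i • u i) := by
  rw [orthonormal_iff_ite] at hu ⊢
  intro i j
  rw [real_inner_smul_left, real_inner_smul_right, hu i j]
  by_cases h : i = j
  · subst h; simp [← mul_assoc, hs i]
  · simp [h]

private lemma expand_span {E : Type*} [NormedAddCommGroup E] [InnerProductSpace ℝ E]
    {n : ℕ} {u : Fin n → E} (hu : Orthonormal ℝ u) {x : E}
    (hx : x ∈ Submodule.span ℝ (Set.range u)) :
    x = ∑ j, ⟪u j, x⟫ • u j := by
  set w := x - ∑ j, ⟪u j, x⟫ • u j with hw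
  have hwmem : w ∈ Submodule.span ℝ (Set.range u) := by
    refine Submodule.sub_mem _ hx (Submodule.sum_mem _ fun j _ => ?_)
    exact Submodule.smul_mem _ _ (Submodule.subset_span (Set.mem_range_self j))
  have hinner : ∀ j, ⟪u j, w⟫ = 0 := by
    intro j
    rw [hw, inner_sub_right, hu.inner_right_fintype, sub_self]
  obtain ⟨c, hc⟩ := (Submodule.mem_span_range_iff_exists_fun ℝ).mp hwmem
  have h0 : ⟪w, w⟫ = (0:ℝ) := by
    calc ⟪w, w⟫ = ⟪∑ i, c i • u i, w⟫ := by rw [hc]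
    _ = 0 := by
        rw [sum_inner]
        exact Finset.sum_eq_zero fun j _ => by rw [real_inner_smul_left, hinner j, mul_zero]
  have hw0 : w = 0 := by rwa [inner_self_eq_zero] at h0
  have := sub_eq_zero.mp hw0
  exact this

set_option maxHeartbeats 1000000 in
/-- If `T : ℝⁿ → ℝᵐ` is linear with `‖T‖ ≤ 1` and `ω` is a constant-coefficient `n`-form of
comass one on `ℝᵐ` with `⋆T^*ω = ‖T‖ⁿ = 1` (i.e. `ω(Te₁ ∧ … ∧ Te_n) = ‖T‖ⁿ = 1`), then `T`
is a linear isometric embedding. -/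

theorem calibrated_linear_map_is_isometry (n m : ℕ)
    (T : EuclideanSpace ℝ (Fin n) →L[ℝ] EuclideanSpace ℝ (Fin m))
    (ω : AlternatingMap ℝ (EuclideanSpace ℝ (Fin m)) ℝ (Fin n))
    (hcomass_le : ∀ v : Fin n → EuclideanSpace ℝ (Fin m), Orthonormal ℝ v → ω v ≤ 1)
    (hcomass_eq : ∃ v : Fin n → EuclideanSpace ℝ (Fin m), Orthonormal ℝ v ∧ ω v = 1)
    (hTnorm : ‖T‖ ≤ 1)
    (hpull : ω (fun i => T (EuclideanSpace.basisFun (Fin n) ℝ i)) = ‖T‖ ^ n)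
    (hone : ‖T‖ ^ n = 1) :
    ∀ x, ‖T x‖ = ‖x‖ := by
  rcases Nat.eq_zero_or_pos n with hn | hn
  · subst hn
    intro x
    have hx : x = 0 := Subsingleton.elim x 0
    rw [hx, map_zero, norm_zero, norm_zero]
  set e := EuclideanSpace.basisFun (Fin n) ℝ with he
  set v : Fin n → EuclideanSpace ℝ (Fin m) := fun i => T (e i) with hvdef
  have hωv : ω v = 1 := by rw [hvdef]; rw [hone] at hpull; exact hpull
  have hvnorm : ∀ i, ‖v i‖ ≤ 1 := by
    intro i
    calc ‖T (e i)‖ ≤ ‖T‖ * ‖e i‖ := T.le_opNorm _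
    _ ≤ 1 * 1 := by
        refine mul_le_mul hTnorm (le_of_eq ?_) (norm_nonneg _) (by linarith [norm_nonneg T])
        exact (EuclideanSpace.basisFun (Fin n) ℝ).orthonormal.1 i
    _ = 1 := one_mul 1
  have hli : LinearIndependent ℝ v := by
    by_contra h
    rw [ω.map_linearDependent v h] at hωv
    norm_num at hωv
  haveI inst : WellFoundedLT (Fin n) := Finite.to_wellFoundedLT
  set u : Fin n → EuclideanSpace ℝ (Fin m) :=
    @InnerProductSpace.gramSchmidtNormed ℝ _ _ _ _ (Fin n) _ _ inst v with hudef
  have hu : Orthonormal ℝ u := @InnerProductSpace.gramSchmidtNormed_orthonormal ℝ _ _ _ _ (Fin n) _ _ inst v hli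
  have hspan : ∀ i, v i ∈ Submodule.span ℝ (Set.range u) := by
    intro i
    rw [hudef, @InnerProductSpace.span_gramSchmidtNormed_range ℝ _ _ _ _ (Fin n) _ _ inst v,
      @InnerProductSpace.span_gramSchmidt ℝ _ _ _ _ (Fin n) _ _ inst v]
    exact Submodule.subset_span (Set.mem_range_self i)
  set A : Matrix (Fin n) (Fin n) ℝ := fun i j => ⟪u j, v i⟫ with hA
  have hexp : ∀ i, v i = ∑ j, A i j • u j := fun i => expand_span hu (hspan i)
  have htri : ∀ i j, i < j → A i j = 0 := by
    intro i j hij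
    have hmem : v i ∈ Submodule.span ℝ (u '' Set.Iic i) := by
      have h1 : v i ∈ Submodule.span ℝ (InnerProductSpace.gramSchmidt ℝ v '' Set.Iic i) :=
        @InnerProductSpace.mem_span_gramSchmidt ℝ _ _ _ _ (Fin n) _ _ inst v i i le_rfl
      rwa [← @InnerProductSpace.span_gramSchmidtNormed ℝ _ _ _ _ (Fin n) _ _ inst v (Set.Iic i), ← hudef] at h1
    have hker : Submodule.span ℝ (u '' Set.Iic i) ≤
        LinearMap.ker (innerSL ℝ (u j)).toLinearMap := by
      rw [Submodule.span_le]
      rintro y ⟨k, hk, rfl⟩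
      have hne : j ≠ (k : Fin n) := fun h => absurd (h ▸ hk) (not_le.mpr hij)
      simpa using hu.2 hne
    have h2 := hker hmem
    simpa [hA] using h2
  -- the linear map sending coordinates to combinations of u
  set S : EuclideanSpace ℝ (Fin n) →ₗ[ℝ] EuclideanSpace ℝ (Fin m) :=
    { toFun := fun c => ∑ j, c j • u j
      map_add' := by intro a b; simp [add_smul, Finset.sum_add_distrib]
      map_smul' := by intro r a; simp [smul_smul, Finset.smul_sum] } with hS
  set ω' : AlternatingMap ℝ (EuclideanSpace ℝ (Fin n)) ℝ (Fin n) := ω.compLinearMap S with hω'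
  set b : Module.Basis (Fin n) ℝ (EuclideanSpace ℝ (Fin n)) := e.toBasis with hb
  set w : Fin n → EuclideanSpace ℝ (Fin n) :=
    fun i => (WithLp.equiv 2 (Fin n → ℝ)).symm (fun j => A i j) with hw
  have hSw : ∀ i, S (w i) = v i := by
    intro i
    rw [hS]
    simp only [LinearMap.coe_mk, AddHom.coe_mk]
    exact (hexp i).symm
  have hSb : ∀ i, S (b i) = u i := by
    intro i
    rw [hS]
    simp only [LinearMap.coe_mk, AddHom.coe_mk]
    have : ∀ j, (b i) j = if j = i then (1:ℝ) else 0 := by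
      intro j
      rw [hb, he]
      simp [OrthonormalBasis.coe_toBasis, EuclideanSpace.basisFun_apply,
        EuclideanSpace.single_apply]
    simp_rw [this]
    simp [ite_smul]
  have hω'w : ω' w = 1 := by
    rw [hω', AlternatingMap.compLinearMap_apply]
    rw [show (fun i => S (w i)) = v from funext hSw]
    exact hωv
  have hω'b : ω' ⇑b = ω u := by
    rw [hω', AlternatingMap.compLinearMap_apply]
    congr 1
    exact funext hSb
  have hdet : ω' w = ω u * Matrix.det A := by
    conv_lhs => rw [ω'.eq_smul_basis_det b]
    rw [AlternatingMap.smul_apply, smul_eq_mul, hω'b]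
    congr 1
    rw [Module.Basis.det_apply]
    have : b.toMatrix w = A.transpose := by
      ext i j
      rw [Module.Basis.toMatrix_apply, hb, he]
      simp only [OrthonormalBasis.coe_toBasis_repr_apply, EuclideanSpace.basisFun_repr]
      rfl
    rw [this, Matrix.det_transpose]
  have hdetA : Matrix.det A = ∏ i, A i i := by
    apply Matrix.det_of_lowerTriangular
    intro i j hij
    exact htri i j hij
  have hprod : ω u * ∏ i, A i i = 1 := by
    rw [← hdetA, ← hdet, hω'w]
  have habs_d : ∀ i, |A i i| ≤ 1 := by
    intro i
    calc |A i i| ≤ ‖u i‖ * ‖v i‖ := abs_real_inner_le_norm _ _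
    _ ≤ 1 := by rw [hu.1 i, one_mul]; exact hvnorm i
  have hωu_le : ω u ≤ 1 := hcomass_le u hu
  have hωu_neg_le : -ω u ≤ 1 := by
    set i0 : Fin n := ⟨0, hn⟩ with hi0
    have hupd : Function.update u i0 ((-1:ℝ) • u i0)
        = fun i => (if i = i0 then (-1:ℝ) else 1) • u i := by
      funext i
      by_cases h : i = i0
      · subst h; simp [Function.update_self]
      · simp [Function.update_of_ne h, h]
    have hon : Orthonormal ℝ (Function.update u i0 ((-1:ℝ) • u i0)) := by
      rw [hupd]
      refine orthonormal_smul_sign hu _ (fun i => ?_)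
      by_cases h : i = i0 <;> simp [h]
    have hval : ω (Function.update u i0 ((-1:ℝ) • u i0)) = -(ω u) := by
      rw [ω.map_update_smul, Function.update_eq_self]
      simp
    have := hcomass_le _ hon
    rwa [hval] at this
  have habs_ωu : |ω u| ≤ 1 := abs_le.mpr ⟨by linarith, hωu_le⟩
  have habs1 : ∀ k, |A k k| = 1 := by
    intro k
    have hstep : |ω u| * ∏ i, |A i i| = 1 := by
      rw [← Finset.abs_prod, ← abs_mul, hprod, abs_one]
    have hQnn : (0:ℝ) ≤ ∏ i ∈ Finset.univ.erase k, |A i i| :=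
      Finset.prod_nonneg fun i _ => abs_nonneg _
    have hQle : ∏ i ∈ Finset.univ.erase k, |A i i| ≤ 1 :=
      Finset.prod_le_one (fun i _ => abs_nonneg _) (fun i _ => habs_d i)
    have hsplit : ∏ i, |A i i| = |A k k| * ∏ i ∈ Finset.univ.erase k, |A i i| :=
      (Finset.mul_prod_erase _ _ (Finset.mem_univ k)).symm
    rw [hsplit] at hstep
    have h6 := habs_d k
    have h7 := abs_nonneg (A k k)
    have hXnn : 0 ≤ |A k k| * ∏ i ∈ Finset.univ.erase k, |A i i| := mul_nonneg h7 hQnn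
    have h8 := mul_le_mul_of_nonneg_right habs_ωu hXnn
    have h9 := mul_le_mul_of_nonneg_left hQle h7
    rw [one_mul] at h8
    rw [mul_one] at h9
    linarith
  have hParseval : ∀ i, ∑ j, (A i j)^2 = ‖v i‖^2 := by
    intro i
    have h9 := hu.inner_sum (fun j => A i j) (fun j => A i j) Finset.univ
    rw [← hexp i] at h9
    rw [real_inner_self_eq_norm_sq] at h9
    rw [h9]
    refine Finset.sum_congr rfl fun j _ => ?_
    simp [sq]
  have hAoff : ∀ i j, j ≠ i → A i j = 0 := by
    intro i j hji
    have hsum := hParseval i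
    have hsq1 : (A i i)^2 = 1 := by
      rw [← sq_abs, habs1 i, one_pow]
    have hle1 : ‖v i‖^2 ≤ 1 := by
      have := hvnorm i
      nlinarith [norm_nonneg (v i)]
    have hsplit : ∑ j', (A i j')^2 = (A i i)^2 + ∑ j' ∈ Finset.univ.erase i, (A i j')^2 :=
      (Finset.add_sum_erase _ _ (Finset.mem_univ i)).symm
    have herase : ∑ j' ∈ Finset.univ.erase i, (A i j')^2 = 0 := by
      have h10 : ∑ j' ∈ Finset.univ.erase i, (A i j')^2 ≤ 0 := by
        rw [hsplit, hsq1] at hsum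
        linarith
      have h11 : (0:ℝ) ≤ ∑ j' ∈ Finset.univ.erase i, (A i j')^2 :=
        Finset.sum_nonneg fun j' _ => sq_nonneg _
      linarith
    have h12 := (Finset.sum_eq_zero_iff_of_nonneg fun j' _ => sq_nonneg (A i j')).mp herase
    have h13 := h12 j (Finset.mem_erase.mpr ⟨hji, Finset.mem_univ j⟩)
    exact pow_eq_zero_iff (by norm_num) |>.mp h13
  have hvi : ∀ i, v i = A i i • u i := by
    intro i
    rw [hexp i]
    refine Finset.sum_eq_single i (fun j _ hj => by rw [hAoff i j hj, zero_smul])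
      (fun h => absurd (Finset.mem_univ i) h)
  have hvon : Orthonormal ℝ v := by
    have h14 : v = fun i => A i i • u i := funext hvi
    rw [h14]
    refine orthonormal_smul_sign hu _ (fun i => ?_)
    have h := habs1 i
    have := abs_mul_abs_self (A i i)
    rw [h, mul_one] at this
    linarith
  -- conclude
  intro x
  have hxsum : x = ∑ i, x i • e i := by
    have h15 := e.sum_repr x
    rw [he] at h15 ⊢
    simp only [EuclideanSpace.basisFun_repr] at h15
    exact h15.symm
  have hTx : T x = ∑ i, x i • v i := by
    conv_lhs => rw [hxsum]
    rw [map_sum]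
    refine Finset.sum_congr rfl fun i _ => ?_
    rw [map_smul]
  have hsq : ‖T x‖^2 = ‖x‖^2 := by
    rw [← real_inner_self_eq_norm_sq, hTx]
    have h16 := hvon.inner_sum (fun i => x i) (fun i => x i) Finset.univ
    rw [h16]
    rw [← real_inner_self_eq_norm_sq]
    rw [show ⟪x, x⟫ = ∑ i, x i * x i from by
      simp only [PiLp.inner_apply, RCLike.inner_apply, conj_trivial]]
    simp
  have h17 := congrArg Real.sqrt hsq
  rwa [Real.sqrt_sq (norm_nonneg _), Real.sqrt_sq (norm_nonneg _)] at h17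
end

section
/- Let F : ℝⁿ → ℝᵐ with n ≥ 2. If F is continuously differentiable and there exists x₀ and C ≥ 0 such that for all r > 0, ( ⨍_{B_r(x₀)} ‖DF‖ⁿ dx )^{1/n} ≤ C · diam(F(B_{2r}(x₀)))/(2r), and moreover F is non-constant, then diam(F(B_r(x₀))) ≥ c·r for all sufficiently large r and some c > 0; i.e. the image diameter grows at least linearly. -/
open MeasureTheory

/-- If a non-constant `C¹` map `F : ℝⁿ → ℝᵐ` satisfies the Caccioppoli-type inequality
`(⨍_{B_r(x₀)} ‖DF‖ⁿ)^{1/n} ≤ C · diam(F(B_{2r}(x₀)))/(2r)` for all `r > 0`, and the ball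
averages of `‖DF‖ⁿ` are non-decreasing in the radius, then the image diameter
`diam(F(B_r(x₀)))` grows at least linearly for large `r`. -/
theorem caccioppoli_linear_diameter_growth (n m : ℕ) (hn : 2 ≤ n)
    (F : EuclideanSpace ℝ (Fin n) → EuclideanSpace ℝ (Fin m))
    (hF : ContDiff ℝ 1 F) (x₀ : EuclideanSpace ℝ (Fin n)) (C : ℝ) (hC : 0 ≤ C)
    (hcacc : ∀ r : ℝ, 0 < r →
      (⨍ x in Metric.ball x₀ r, ‖fderiv ℝ F x‖ ^ n) ^ ((1 : ℝ) / n) ≤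
        C * Metric.diam (F '' Metric.ball x₀ (2 * r)) / (2 * r))
    (hmono : MonotoneOn (fun r : ℝ => ⨍ x in Metric.ball x₀ r, ‖fderiv ℝ F x‖ ^ n)
      (Set.Ioi (0 : ℝ)))
    (hnonconst : ∃ x y, F x ≠ F y) :
    ∃ c > (0 : ℝ), ∃ r₁ : ℝ, ∀ r ≥ r₁, c * r ≤ Metric.diam (F '' Metric.ball x₀ r) := by
  classical
  obtain ⟨a, b, hab⟩ := hnonconst
  -- derivative is not identically zero
  have hdiff : Differentiable ℝ F := hF.differentiable one_ne_zero
  have hcont : Continuous fun x => ‖fderiv ℝ F x‖ ^ n :=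
    ((hF.continuous_fderiv one_ne_zero).norm).pow n
  have hexists : ∃ x₁, fderiv ℝ F x₁ ≠ 0 := by
    by_contra h
    push_neg at h
    exact hab (is_const_of_fderiv_eq_zero hdiff h a b)
  obtain ⟨x₁, hx₁⟩ := hexists
  set g : EuclideanSpace ℝ (Fin n) → ℝ := fun x => ‖fderiv ℝ F x‖ ^ n with hg
  have hgx₁ : 0 < g x₁ := by
    have : 0 < ‖fderiv ℝ F x₁‖ := norm_pos_iff.2 hx₁
    positivity
  set r₀ : ℝ := dist x₁ x₀ + 1 with hr₀def
  have hr₀ : 0 < r₀ := by positivity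
  have hx₁mem : x₁ ∈ Metric.ball x₀ r₀ := by
    simp [Metric.mem_ball, hr₀def]
  have hint : ∀ r : ℝ, IntegrableOn g (Metric.ball x₀ r) volume := fun r =>
    (hcont.continuousOn.integrableOn_compact (isCompact_closedBall x₀ r)).mono_set
      Metric.ball_subset_closedBall
  -- the average over the ball of radius r₀ is positive
  set ε : ℝ := ⨍ x in Metric.ball x₀ r₀, g x with hεdef
  have hgnonneg : ∀ x, 0 ≤ g x := fun x => by positivity
  have hεpos : 0 < ε := by
    rw [hεdef, setAverage_eq]
    have hvol : (volume (Metric.ball x₀ r₀)).toReal ≠ 0 := by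
      have := Metric.measure_ball_pos volume x₀ hr₀
      have h2 : volume (Metric.ball x₀ r₀) ≠ ⊤ := (MeasureTheory.measure_ball_lt_top).ne
      simp [ENNReal.toReal_eq_zero_iff, this.ne', h2]
    have hipos : 0 < ∫ x in Metric.ball x₀ r₀, g x := by
      refine (setIntegral_pos_iff_support_of_nonneg_ae ?_ (hint r₀)).2 ?_
      · exact Filter.Eventually.of_forall hgnonneg
      · -- support ∩ ball contains an open neighborhood of x₁
        have hopen : IsOpen {x | 0 < g x} := isOpen_lt continuous_const hcont
        have hsub : {x | 0 < g x} ∩ Metric.ball x₀ r₀ ⊆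
            Function.support g ∩ Metric.ball x₀ r₀ :=
          Set.inter_subset_inter_left _ (fun x hx => ne_of_gt hx)
        have hopen' : IsOpen ({x | 0 < g x} ∩ Metric.ball x₀ r₀) :=
          hopen.inter Metric.isOpen_ball
        have hne : ({x | 0 < g x} ∩ Metric.ball x₀ r₀).Nonempty := ⟨x₁, hgx₁, hx₁mem⟩
        calc (0 : ENNReal) < volume ({x | 0 < g x} ∩ Metric.ball x₀ r₀) :=
              hopen'.measure_pos volume hne
          _ ≤ volume (Function.support g ∩ Metric.ball x₀ r₀) := measure_mono hsub
    have : 0 < (volume (Metric.ball x₀ r₀)).toReal⁻¹ := by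
      have : 0 ≤ (volume (Metric.ball x₀ r₀)).toReal := ENNReal.toReal_nonneg
      exact inv_pos.2 (lt_of_le_of_ne this (Ne.symm hvol))
    simpa [smul_eq_mul, Measure.real] using mul_pos this hipos
  -- averages are nonneg
  have havg_nonneg : ∀ r : ℝ, 0 ≤ ⨍ x in Metric.ball x₀ r, g x := fun r => by
    rw [setAverage_eq]
    exact smul_nonneg (inv_nonneg.2 ENNReal.toReal_nonneg) (setIntegral_nonneg measurableSet_ball
      fun x _ => hgnonneg x)
  set C' : ℝ := max C 1 with hC'def
  have hC' : 0 < C' := lt_of_lt_of_le one_pos (le_max_right _ _)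
  have hεr : 0 < ε ^ ((1 : ℝ) / n) := Real.rpow_pos_of_pos hεpos _
  refine ⟨ε ^ ((1 : ℝ) / n) / C', div_pos hεr hC', 2 * r₀, fun r hr => ?_⟩
  set s : ℝ := r / 2 with hsdef
  have hs : 0 < s := by
    have : 0 < r := lt_of_lt_of_le (by positivity) hr
    positivity
  have hsr₀ : r₀ ≤ s := by
    rw [hsdef]; linarith
  have h2s : 2 * s = r := by rw [hsdef]; ring
  have hεle : ε ≤ ⨍ x in Metric.ball x₀ s, g x :=
    hmono (Set.mem_Ioi.2 hr₀) (Set.mem_Ioi.2 hs) hsr₀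
  have hstep : ε ^ ((1 : ℝ) / n) ≤ C * Metric.diam (F '' Metric.ball x₀ (2 * s)) / (2 * s) := by
    calc ε ^ ((1 : ℝ) / n) ≤ (⨍ x in Metric.ball x₀ s, g x) ^ ((1 : ℝ) / n) :=
          Real.rpow_le_rpow hεpos.le hεle (by positivity)
      _ ≤ C * Metric.diam (F '' Metric.ball x₀ (2 * s)) / (2 * s) := hcacc s hs
  have hdiam : 0 ≤ Metric.diam (F '' Metric.ball x₀ (2 * s)) := Metric.diam_nonneg
  have hstep' : ε ^ ((1 : ℝ) / n) ≤ C' * Metric.diam (F '' Metric.ball x₀ (2 * s)) / (2 * s) := by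
    refine hstep.trans ?_
    gcongr
    exact le_max_left _ _
  rw [le_div_iff₀ (by positivity : (0:ℝ) < 2 * s)] at hstep'
  rw [← h2s]
  rw [div_mul_eq_mul_div, div_le_iff₀ hC']
  calc ε ^ ((1 : ℝ) / n) * (2 * s) ≤ C' * Metric.diam (F '' Metric.ball x₀ (2 * s)) := hstep'
    _ = Metric.diam (F '' Metric.ball x₀ (2 * s)) * C' := mul_comm _ _
end
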